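/- For every integer p and every non-negative integer n, the generalized harmonic number satisfies H_{n+1}^{(p)} = Σ_{k=1}^{n+1} 1/k^p = (1/n!) · Σ_{j=0}^{n} [n+1, j+1] · B_j^{(p)}, where [n+1, j+1] denotes the unsigned Stirling number of the first kind and B_j^{(p)} denotes the j-th poly-Bernoulli number of index p. The identity is an equality of rational numbers. -/

import Mathlib

/-- Unsigned Stirling numbers of the first kind: `[n, k]` counts permutations
of `n` elements with `k` disjoint cycles. -/
def stirlingFirst : ℕ → ℕ → ℕ
  | 0, 0 => 1
  | 0, _ + 1 => 0
  | _ + 1, 0 => 0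
  | n + 1, k + 1 => n * stirlingFirst n (k + 1) + stirlingFirst n k

/-- Stirling numbers of the second kind: `{n, k}` counts partitions of an
`n`-element set into `k` non-empty blocks. -/
def stirlingSecond : ℕ → ℕ → ℕ
  | 0, 0 => 1
  | 0, _ + 1 => 0
  | _ + 1, 0 => 0
  | n + 1, k + 1 => (k + 1) * stirlingSecond n (k + 1) + stirlingSecond n k

/-- Generalized harmonic number `H_n^(p) = ∑_{k=1}^n k^(-p)` as a rational number. -/
def genHarmonic (n : ℕ) (p : ℤ) : ℚ :=
  ∑ k ∈ Finset.Icc 1 n, ((k : ℚ)) ^ (-p)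

/-- Poly-Bernoulli number `B_n^(p)`, via the explicit formula
`B_n^(p) = ∑_{m=0}^n (-1)^(n+m) ⬝ m! ⬝ {n, m} / (m+1)^p`. -/
def polyBernoulli (p : ℤ) (n : ℕ) : ℚ :=
  ∑ m ∈ Finset.range (n + 1),
    (-1 : ℚ) ^ (n + m) * (Nat.factorial m) * (stirlingSecond n m) / ((m + 1 : ℚ)) ^ p

lemma ss_zero : ∀ n m : ℕ, n < m → stirlingSecond n m = 0 := by
  intro n
  induction n with
  | zero => intro m h; match m, h with | m+1, _ => rfl
  | succ n ih =>
    intro m h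
    match m, h with
    | k+1, h =>
      show (k + 1) * stirlingSecond n (k + 1) + stirlingSecond n k = 0
      rw [ih (k+1) (by omega), ih k (by omega)]; ring

lemma sf_zero : ∀ n m : ℕ, n < m → stirlingFirst n m = 0 := by
  intro n
  induction n with
  | zero => intro m h; match m, h with | m+1, _ => rfl
  | succ n ih =>
    intro m h
    match m, h with
    | k+1, h =>
      show n * stirlingFirst n (k + 1) + stirlingFirst n k = 0
      rw [ih (k+1) (by omega), ih k (by omega)]; ring

lemma key (n : ℕ) : ∀ m : ℕ,
    ∑ j ∈ Finset.range (n+1), (-1:ℚ)^(j+m) * stirlingFirst (n+1) (j+1) * stirlingSecond j m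
      = if m ≤ n then (n.factorial : ℚ) / (m.factorial : ℚ) else 0 := by
  induction n with
  | zero =>
    intro m
    rw [Finset.sum_range_one]
    match m with
    | 0 => norm_num [stirlingFirst, stirlingSecond]
    | m+1 =>
      rw [show stirlingSecond 0 (m+1) = 0 from rfl]
      simp
  | succ n ih =>
    intro m
    have step : ∀ j, (stirlingFirst (n+2) (j+1) : ℚ)
        = (n+1) * stirlingFirst (n+1) (j+1) + stirlingFirst (n+1) j := by
      intro j; show ((( n+1) * stirlingFirst (n+1) (j+1) + stirlingFirst (n+1) j : ℕ) : ℚ) = _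
      push_cast; ring
    have expand : ∑ j ∈ Finset.range (n+2), (-1:ℚ)^(j+m) * stirlingFirst (n+2) (j+1) * stirlingSecond j m
        = (n+1) * ∑ j ∈ Finset.range (n+2), (-1:ℚ)^(j+m) * stirlingFirst (n+1) (j+1) * stirlingSecond j m
          + ∑ j ∈ Finset.range (n+2), (-1:ℚ)^(j+m) * stirlingFirst (n+1) j * stirlingSecond j m := by
      rw [Finset.mul_sum, ← Finset.sum_add_distrib]
      exact Finset.sum_congr rfl fun j _ => by rw [step]; ring
    have S1 : ∑ j ∈ Finset.range (n+2), (-1:ℚ)^(j+m) * stirlingFirst (n+1) (j+1) * stirlingSecond j m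
        = ∑ j ∈ Finset.range (n+1), (-1:ℚ)^(j+m) * stirlingFirst (n+1) (j+1) * stirlingSecond j m := by
      rw [Finset.sum_range_succ, sf_zero (n+1) (n+2) (by omega)]
      simp
    have S2 : ∑ j ∈ Finset.range (n+2), (-1:ℚ)^(j+m) * stirlingFirst (n+1) j * stirlingSecond j m
        = ∑ j ∈ Finset.range (n+1), (-1:ℚ)^(j+1+m) * stirlingFirst (n+1) (j+1) * stirlingSecond (j+1) m := by
      rw [Finset.sum_range_succ']
      simp [stirlingFirst]
    rw [expand, S1, S2, ih m]
    match m with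
    | 0 =>
      have : ∀ j : ℕ, stirlingSecond (j+1) 0 = 0 := fun j => rfl
      simp only [this, Nat.cast_zero, mul_zero, Finset.sum_const_zero]
      simp [Nat.factorial_succ]
    | k+1 =>
      have ssucc : ∀ j : ℕ, (stirlingSecond (j+1) (k+1) : ℚ)
          = (k+1) * stirlingSecond j (k+1) + stirlingSecond j k := by
        intro j; show (((k+1) * stirlingSecond j (k+1) + stirlingSecond j k : ℕ) : ℚ) = _
        push_cast; ring
      have S2' : ∑ j ∈ Finset.range (n+1), (-1:ℚ)^(j+1+(k+1)) * stirlingFirst (n+1) (j+1) * stirlingSecond (j+1) (k+1)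
          = -(k+1) * ∑ j ∈ Finset.range (n+1), (-1:ℚ)^(j+(k+1)) * stirlingFirst (n+1) (j+1) * stirlingSecond j (k+1)
            + ∑ j ∈ Finset.range (n+1), (-1:ℚ)^(j+k) * stirlingFirst (n+1) (j+1) * stirlingSecond j k := by
        rw [Finset.mul_sum, ← Finset.sum_add_distrib]
        refine Finset.sum_congr rfl fun j _ => ?_
        rw [ssucc]
        have h1 : (-1:ℚ)^(j+1+(k+1)) = -(-1:ℚ)^(j+(k+1)) := by
          rw [show j+1+(k+1) = (j+(k+1))+1 by ring, pow_succ]; ring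
        have h3 : (-1:ℚ)^(j+k) = -(-1:ℚ)^(j+(k+1)) := by
          rw [show j+(k+1) = (j+k)+1 by ring, pow_succ]; ring
        rw [h1, h3]; ring
      rw [S2', ih (k+1), ih k]
      by_cases h1 : k+1 ≤ n
      · have h2 : k ≤ n := by omega
        have h3 : k+1 ≤ n+1 := by omega
        simp only [if_pos h1, if_pos h2, if_pos h3]
        rw [Nat.factorial_succ n, Nat.factorial_succ k]
        have hk : (k.factorial : ℚ) ≠ 0 := by positivity
        field_simp
        push_cast; ring
      · by_cases h2 : k ≤ n
        · have hk : k = n := by omega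
          subst hk
          simp only [if_neg h1, if_pos (le_refl k), if_pos (by omega : k+1 ≤ k+1)]
          rw [Nat.factorial_succ k]
          have hk : (k.factorial : ℚ) ≠ 0 := by positivity
          field_simp
          ring
        · simp only [if_neg h1, if_neg h2, if_neg (by omega : ¬ k+1 ≤ n+1)]
          ring

theorem genHarmonic_eq_sum_stirlingFirst_polyBernoulli (p : ℤ) (n : ℕ) :
    genHarmonic (n + 1) p =
      (1 / (Nat.factorial n : ℚ)) *
        ∑ j ∈ Finset.range (n + 1), (stirlingFirst (n + 1) (j + 1) : ℚ) * polyBernoulli p j := by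
  have hn : (n.factorial : ℚ) ≠ 0 := by positivity
  have hrhs : ∑ j ∈ Finset.range (n + 1), (stirlingFirst (n + 1) (j + 1) : ℚ) * polyBernoulli p j
      = ∑ m ∈ Finset.range (n + 1),
          ((m.factorial : ℚ) / ((m : ℚ) + 1) ^ p) *
            ∑ j ∈ Finset.range (n + 1),
              (-1:ℚ)^(j+m) * stirlingFirst (n+1) (j+1) * stirlingSecond j m := by
    calc ∑ j ∈ Finset.range (n + 1), (stirlingFirst (n + 1) (j + 1) : ℚ) * polyBernoulli p j
        = ∑ j ∈ Finset.range (n + 1), ∑ m ∈ Finset.range (n + 1),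
            (stirlingFirst (n + 1) (j + 1) : ℚ) *
              ((-1:ℚ)^(j+m) * m.factorial * stirlingSecond j m / ((m:ℚ)+1) ^ p) := by
          refine Finset.sum_congr rfl fun j hj => ?_
          rw [polyBernoulli, Finset.mul_sum]
          refine Finset.sum_subset (Finset.range_subset_range.2 (Finset.mem_range.1 hj)) ?_
          intro m _ hm
          rw [ss_zero j m (by simpa using hm)]
          simp
      _ = ∑ m ∈ Finset.range (n + 1), ∑ j ∈ Finset.range (n + 1),
            (stirlingFirst (n + 1) (j + 1) : ℚ) *
              ((-1:ℚ)^(j+m) * m.factorial * stirlingSecond j m / ((m:ℚ)+1) ^ p) :=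
          Finset.sum_comm
      _ = _ := by
          refine Finset.sum_congr rfl fun m _ => ?_
          rw [Finset.mul_sum]
          refine Finset.sum_congr rfl fun j _ => ?_
          ring
  rw [hrhs]
  have hkey : ∀ m ∈ Finset.range (n + 1),
      ((m.factorial : ℚ) / ((m : ℚ) + 1) ^ p) *
        ∑ j ∈ Finset.range (n + 1),
          (-1:ℚ)^(j+m) * stirlingFirst (n+1) (j+1) * stirlingSecond j m
      = (n.factorial : ℚ) * ((m : ℚ) + 1) ^ (-p) := by
    intro m hm
    rw [key n m, if_pos (Nat.lt_succ_iff.mp (Finset.mem_range.1 hm))]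
    have hm1 : ((m:ℚ)+1) ^ p ≠ 0 := zpow_ne_zero p (by positivity)
    have hmf : (m.factorial : ℚ) ≠ 0 := by positivity
    rw [zpow_neg]
    field_simp
  rw [Finset.sum_congr rfl hkey, ← Finset.mul_sum, genHarmonic, ← Finset.Ico_add_one_right_eq_Icc, Finset.sum_Ico_eq_sum_range]
  rw [show n + 1 + 1 - 1 = n + 1 from rfl]
  rw [one_div, ← mul_assoc, inv_mul_cancel₀ hn, one_mul]
  refine Finset.sum_congr rfl fun m _ => ?_
  push_cast
  ring_nf
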